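/- Let 1 ≤ k ≤ m−1, d = gcd(k,m), λ, μ ∈ F_{q^m}^* with x^{q^k−1} = −λ/μ having a solution in F_{q^m}^*. Then ker(x ↦ λx + μx^{q^k}) is an F_{q^d}-subspace of F_{q^m} of F_q-dimension d, equal to {0} together with a single coset of F_{q^d}^* in F_{q^m}^*. -/

import Mathlib

/-- If `x^{q^k-1} = -λ/μ` has a solution `x₀ ∈ F_{q^m}^*`, then the kernel of
`x ↦ λx + μx^{q^k}` equals `{c·x₀ : c ∈ F_{q^d}}` (i.e. `{0}` together with a single coset
of `F_{q^d}^*`, where `F_{q^d}` is the subfield fixed by `x ↦ x^{q^d}`), and it is an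
`F_q`-subspace of dimension `d = gcd(k,m)`. -/
theorem stmt7 (K L : Type*) [Field K] [Fintype K] [Field L] [Fintype L] [Algebra K L]
    (hm : 2 ≤ Module.finrank K L)
    (k : ℕ) (hk1 : 1 ≤ k) (hk2 : k ≤ Module.finrank K L - 1)
    (lam mu : L) (hlam : lam ≠ 0) (hmu : mu ≠ 0)
    (x0 : L) (hx0 : x0 ≠ 0) (hsol : x0 ^ (Fintype.card K ^ k - 1) = -(lam / mu))
    (φ : L →ₗ[K] L) (hφ : ∀ x, φ x = lam * x + mu * x ^ Fintype.card K ^ k) :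
    (∀ x : L, φ x = 0 ↔
      ∃ c : L, c ^ Fintype.card K ^ Nat.gcd k (Module.finrank K L) = c ∧ x = c * x0) ∧
    Module.finrank K ↥(LinearMap.ker φ) = Nat.gcd k (Module.finrank K L) := by
  classical
  set q := Fintype.card K with hq
  set m := Module.finrank K L with hmdef
  set d := Nat.gcd k m with hddef
  have hq1 : 1 < q := Fintype.one_lt_card
  have hq0 : q ≠ 0 := by omega
  have hd0 : d ≠ 0 := by
    intro h
    rw [hddef, Nat.gcd_eq_zero_iff] at h
    omega
  have hcardL : Fintype.card L = q ^ m := Module.card_eq_pow_finrank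
  -- characteristic setup
  let p := ringChar K
  haveI : CharP K p := ringChar.charP K
  haveI : CharP L p := charP_of_injective_algebraMap (algebraMap K L).injective p
  obtain ⟨f, hpprime, hqpf⟩ := FiniteField.card K p
  haveI := Fact.mk hpprime
  haveI : ExpChar L p := ExpChar.prime hpprime
  -- ring homs x ↦ x ^ q ^ n
  have hhom : ∀ n : ℕ, ∃ ψ : L →+* L, ∀ x : L, ψ x = x ^ q ^ n := by
    intro n
    refine ⟨iterateFrobenius L p ((f : ℕ) * n), fun x => ?_⟩
    rw [iterateFrobenius_def, hq, hqpf, ← pow_mul]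
  have hinj : ∀ (n : ℕ) (x y : L), x ^ q ^ n = y ^ q ^ n → x = y := by
    intro n x y hxy
    obtain ⟨ψ, hψ⟩ := hhom n
    exact ψ.injective (by rw [hψ, hψ, hxy])
  have hpowadd : ∀ (u : L) (s t : ℕ), u ^ q ^ (s + t) = (u ^ q ^ s) ^ q ^ t := by
    intro u s t; rw [← pow_mul, ← pow_add]
  have hmulpow : ∀ (u : L) (a t : ℕ), u ^ q ^ a = u → u ^ q ^ (a * t) = u := by
    intro u a t h
    induction t with
    | zero => simp
    | succ t ih => rw [Nat.mul_succ, hpowadd, ih, h]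
  have hA : ∀ (u : L) (a b : ℕ), u ^ q ^ a = u → u ^ q ^ b = u →
      u ^ q ^ Nat.gcd a b = u := by
    intro u a b
    induction a, b using Nat.gcd.induction with
    | H0 n => intro _ h2; simpa using h2
    | H1 a b ha IH =>
      intro h1 h2
      rw [Nat.gcd_rec]
      refine IH ?_ h1
      have hmul : u ^ q ^ (a * (b / a)) = u := hmulpow u a (b / a) h1
      have key : (u ^ q ^ (b % a)) ^ q ^ (a * (b / a)) = u ^ q ^ (a * (b / a)) := by
        rw [← hpowadd, Nat.mod_add_div, h2, hmul]
      exact hinj _ _ _ key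
  have hB : ∀ (u : L) (a b : ℕ), a ∣ b → u ^ q ^ a = u → u ^ q ^ b = u := by
    rintro u a b ⟨t, rfl⟩ h
    exact hmulpow u a t h
  have hqk0 : 0 < q ^ k := Nat.pow_pos (by omega)
  have hy : ∀ y : L, y ^ q ^ k = y ^ (q ^ k - 1) * y := by
    intro y
    conv_lhs => rw [← Nat.succ_pred_eq_of_pos hqk0]
    rw [pow_succ]
    rfl
  have hx0pow : x0 ^ q ^ k = -(lam / mu) * x0 := by rw [hy, hsol]
  have hqd1 : 1 < q ^ d := Nat.one_lt_pow hd0 hq1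
  -- main characterization
  have hmain : ∀ x : L, φ x = 0 ↔ ∃ c : L, c ^ q ^ d = c ∧ x = c * x0 := by
    intro x
    rw [hφ]
    constructor
    · intro hx
      by_cases hxz : x = 0
      · exact ⟨0, by rw [zero_pow (by omega)], by rw [hxz, zero_mul]⟩
      · have h1 : mu * (x ^ (q ^ k - 1) * x) = -(lam * x) := by
          rw [← hy x]
          exact eq_neg_of_add_eq_zero_right hx
        have h2 : (mu * x ^ (q ^ k - 1)) * x = (-lam) * x := by linear_combination h1
        have h3 : mu * x ^ (q ^ k - 1) = -lam := mul_right_cancel₀ hxz h2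
        have hxpow : x ^ (q ^ k - 1) = -(lam / mu) := by
          field_simp
          linear_combination h3
        refine ⟨x / x0, ?_, (div_mul_cancel₀ x hx0).symm⟩
        have hcn : (x / x0) ^ (q ^ k - 1) = 1 := by
          rw [div_pow, hxpow, hsol,
            div_self (neg_ne_zero.mpr (div_ne_zero hlam hmu))]
        have hck : (x / x0) ^ q ^ k = x / x0 := by rw [hy, hcn, one_mul]
        have hcm : (x / x0) ^ q ^ m = x / x0 := by
          have := FiniteField.pow_card (x / x0)
          rwa [hcardL] at this
        exact hA _ k m hck hcm
    · rintro ⟨c, hcd, rfl⟩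
      have hck : c ^ q ^ k = c := hB c d k (Nat.gcd_dvd_left k m) hcd
      rw [mul_pow, hck, hx0pow]
      field_simp
      ring
  refine ⟨hmain, ?_⟩
  -- the submodule F of q^d-fixed points
  have hF0 : (0 : L) ^ q ^ d = 0 := zero_pow (by omega)
  let F : Submodule K L :=
    { carrier := {c : L | c ^ q ^ d = c}
      add_mem' := by
        intro a b ha hb
        obtain ⟨ψ, hψ⟩ := hhom d
        show (a + b) ^ q ^ d = a + b
        rw [← hψ, map_add, hψ, hψ]
        exact congrArg₂ (· + ·) ha hb
      zero_mem' := hF0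
      smul_mem' := by
        intro a c hc
        show (a • c) ^ q ^ d = a • c
        rw [Algebra.smul_def, mul_pow, hc, ← map_pow, FiniteField.pow_card_pow] }
  have hmemF : ∀ c : L, c ∈ F ↔ c ^ q ^ d = c := fun _ => Iff.rfl
  -- kernel = F scaled by x0
  have hinjmul : Function.Injective (LinearMap.mulRight K x0) := by
    intro a b hab
    simp only [LinearMap.mulRight_apply] at hab
    exact mul_right_cancel₀ hx0 hab
  have hker : LinearMap.ker φ = F.map (LinearMap.mulRight K x0) := by
    ext z
    rw [LinearMap.mem_ker, hmain z, Submodule.mem_map]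
    constructor
    · rintro ⟨c, hc, rfl⟩
      exact ⟨c, hc, by rw [LinearMap.mulRight_apply]⟩
    · rintro ⟨c, hc, rfl⟩
      exact ⟨c, hc, by rw [LinearMap.mulRight_apply]⟩
  -- count F
  set n := q ^ d - 1 with hndef
  have hn0 : 0 < n := by omega
  have hdm : d ∣ m := Nat.gcd_dvd_right k m
  have hqm1 : 1 < q ^ m := Nat.one_lt_pow (by omega) hq1
  have hdvd : n ∣ q ^ m - 1 := by
    obtain ⟨s, hs⟩ := hdm
    rw [hs, pow_mul, hndef]
    simpa using Nat.sub_dvd_pow_sub_pow (q ^ d) 1 s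
  have hcardU : Fintype.card Lˣ = q ^ m - 1 := by
    rw [Fintype.card_units, hcardL]
  obtain ⟨g, hg⟩ := IsCyclic.exists_ofOrder_eq_natCard (α := Lˣ)
  rw [Nat.card_eq_fintype_card] at hg
  set ζu : Lˣ := g ^ ((q ^ m - 1) / n) with hζu
  have hord : orderOf ζu = n := by
    rw [hζu, orderOf_pow, hg, hcardU, Nat.gcd_eq_right (Nat.div_dvd_of_dvd hdvd),
      Nat.div_div_self hdvd (by omega)]
  have hprimu : IsPrimitiveRoot ζu n := by
    have h1 := IsPrimitiveRoot.orderOf ζu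
    rwa [hord] at h1
  have hprim : IsPrimitiveRoot ((ζu : Lˣ) : L) n :=
    IsPrimitiveRoot.coe_units_iff.mpr hprimu
  have hroots : (Polynomial.nthRootsFinset n (1 : L)).card = n := hprim.card_nthRootsFinset
  have h0notin : (0 : L) ∉ Polynomial.nthRootsFinset n (1 : L) := by
    rw [Polynomial.mem_nthRootsFinset hn0, zero_pow (by omega)]
    exact zero_ne_one
  have hmem : ∀ c : L, c ∈ insert (0 : L) (Polynomial.nthRootsFinset n (1 : L)) ↔ c ∈ F := by
    intro c
    rw [Finset.mem_insert, Polynomial.mem_nthRootsFinset hn0, hmemF]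
    constructor
    · rintro (rfl | h1)
      · exact hF0
      · have : c ^ q ^ d = c ^ (n + 1) := by rw [hndef, Nat.sub_add_cancel hqd1.le]
        rw [this, pow_succ, h1, one_mul]
    · intro h
      by_cases hc : c = 0
      · exact Or.inl hc
      · right
        have hnq : n + 1 = q ^ d := by omega
        have h1 : c ^ n * c = 1 * c := by
          rw [← pow_succ, hnq, h, one_mul]
        exact mul_right_cancel₀ hc h1
  haveI : Fintype ↥F := Fintype.ofFinite _
  have hcards : Fintype.card ↥F = q ^ d := by
    have h1 : Fintype.card ↥F = (insert (0 : L) (Polynomial.nthRootsFinset n (1 : L))).card :=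
      (Fintype.card_of_subtype _ hmem).symm ▸
        Fintype.card_of_subtype (insert (0 : L) (Polynomial.nthRootsFinset n (1 : L))) hmem
    rw [h1, Finset.card_insert_of_notMem h0notin, hroots]
    omega
  have hfr : Fintype.card ↥F = q ^ Module.finrank K ↥F := Module.card_eq_pow_finrank
  have hfinF : Module.finrank K ↥F = d := by
    have h2 : q ^ Module.finrank K ↥F = q ^ d := by rw [← hfr, hcards]
    exact Nat.pow_right_injective hq1 h2
  rw [hker, ← LinearEquiv.finrank_eq (Submodule.equivMapOfInjective _ hinjmul F), hfinF]
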